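/- In the situation below (M free of rank d over K⟨φ⟩ with ρ-action matrix D, and J a Janet basis for ⟨p_1,…,p_d⟩), one has m_i < ∞ for all i = 1, …, d. -/

import Mathlib

/-!
Common setup: the skew polynomial ring `D = K{φ,ρ}` (with commuting endomorphisms
`γφ, γρ : K → K`, `φ·x = γφ(x)·φ`, `ρ·x = γρ(x)·ρ`), the free left `D`-module
`𝓕 = ⊕_{i=1}^d D κ_i`, its monomials `φ^k ρ^j κ_i`, the monomial order, cones,
Janet bases, and the data attached to a `D`-module `M` that is free over `K⟨φ⟩`.

`𝓕` is realized concretely as finitely supported coefficient functions on the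
set of monomial indices `(i, k, j) ↔ φ^k ρ^j κ_i`; multiplication by `φ` resp. `ρ`
is the K-semilinear shift operator `PhiMul` resp. `RhoMul`.
-/

namespace JanetSetup

/-- Index of a monomial `φ^k ρ^j κ_i` of `𝓕`: the triple `(i, k, j)`. -/
abbrev MonIx (d : ℕ) := Fin d × ℕ × ℕ

/-- The free module `𝓕 = ⊕_{i=1}^d D κ_i`, as coefficient functions on monomials. -/
abbrev Fr (K : Type) [Field K] (d : ℕ) : Type := MonIx d →₀ K

variable {K : Type} [Field K] {d : ℕ}

/-- Left multiplication by the variable `φ` on `𝓕`. -/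
noncomputable def PhiMul (γφ : K →+* K) (f : Fr K d) : Fr K d :=
  Finsupp.mapDomain (fun m => (m.1, m.2.1 + 1, m.2.2))
    (Finsupp.mapRange (fun x => γφ x) (map_zero γφ) f)

/-- Left multiplication by the variable `ρ` on `𝓕`. -/
noncomputable def RhoMul (γρ : K →+* K) (f : Fr K d) : Fr K d :=
  Finsupp.mapDomain (fun m => (m.1, m.2.1, m.2.2 + 1))
    (Finsupp.mapRange (fun x => γρ x) (map_zero γρ) f)

/-- The left `D`-submodule of `𝓕` generated by a set `s` (as a `K`-subspace:
the `K`-span of all `φ^k ρ^j g`, `g ∈ s`). -/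
noncomputable def DSpan (γφ γρ : K →+* K) (s : Set (Fr K d)) : Submodule K (Fr K d) :=
  Submodule.span K
    {x | ∃ (k j : ℕ) (g : Fr K d), g ∈ s ∧ x = (PhiMul γφ)^[k] ((RhoMul γρ)^[j] g)}

/-- The monomial order: lexicographic with `ρ ≺ φ`, position-over-term with
`κ_{i₁} ≻ κ_{i₂}` for `i₁ < i₂`. -/
def MLt (a b : MonIx d) : Prop :=
  b.1 < a.1 ∨ (a.1 = b.1 ∧ (a.2.1 < b.2.1 ∨ (a.2.1 = b.2.1 ∧ a.2.2 < b.2.2)))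

/-- `m` is the leading monomial of `f`. -/
def IsLm (f : Fr K d) (m : MonIx d) : Prop :=
  m ∈ f.support ∧ ∀ m' ∈ f.support, m' ≠ m → MLt m' m

/-- The `μ`-cone of a monomial `m`; `μ = (φ ∈ μ, ρ ∈ μ)` as a pair of Booleans. -/
def Cone (μ : Bool × Bool) (m : MonIx d) : Set (MonIx d) :=
  {x | ∃ a b : ℕ, (μ.1 = true ∨ a = 0) ∧ (μ.2 = true ∨ b = 0) ∧
      x = (m.1, m.2.1 + a, m.2.2 + b)}

/-- A Janet basis `{(b_1,μ_1),…,(b_r,μ_r)}` for the submodule `N ⊆ 𝓕`: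
the `b_i` generate `N` as a left `D`-module and the set of leading monomials of
nonzero elements of `N` is the disjoint union of the cones `Mon(μ_i)·lm(b_i)`. -/
structure JanetBasis (γφ γρ : K →+* K) (d : ℕ) (N : Submodule K (Fr K d)) where
  r : ℕ
  b : Fin r → Fr K d
  μ : Fin r → Bool × Bool
  /-- the leading monomial of `b i` -/
  lmb : Fin r → MonIx d
  b_ne : ∀ i, b i ≠ 0
  b_lm : ∀ i, IsLm (b i) (lmb i)
  pair_inj : Function.Injective fun i => (b i, μ i)
  span_eq : DSpan γφ γρ (Set.range b) = N
  lm_cover : ∀ f ∈ N, f ≠ 0 → ∀ m, IsLm f m → ∃ i, m ∈ Cone (μ i) (lmb i)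
  cone_lm : ∀ i, ∀ m ∈ Cone (μ i) (lmb i), ∃ f ∈ N, f ≠ 0 ∧ IsLm f m
  disj : ∀ i i' m, m ∈ Cone (μ i) (lmb i) → m ∈ Cone (μ i') (lmb i') → i = i'

variable (γφ γρ : K →+* K)

/-- `f` is reduced (in normal form) w.r.t. the pairs of `J` indexed by `P`:
no monomial of `f` lies in one of the corresponding cones. -/
def IsReduced {N : Submodule K (Fr K d)} (J : JanetBasis γφ γρ d N)
    (P : Set (Fin J.r)) (f : Fr K d) : Prop :=
  ∀ m ∈ f.support, ∀ i ∈ P, m ∉ Cone (J.μ i) (J.lmb i)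

/-- `h` is the normal form `NF(g, ·)` of `g` with respect to the pairs of `J`
indexed by `P`: the reduction process subtracts left multiples of the `b i`
(`i ∈ P`), so `g - h` lies in the `D`-span of these, and the result is reduced. -/
def IsNFOf {N : Submodule K (Fr K d)} (J : JanetBasis γφ γρ d N)
    (P : Set (Fin J.r)) (g h : Fr K d) : Prop :=
  g - h ∈ DSpan γφ γρ (J.b '' P) ∧ IsReduced γφ γρ J P h

/-- The projection `pr : 𝓕 → M`, `φ^k ρ^j κ_i ↦ F^k S^j κ̄_i`, for a `D`-module `M`
with `φ`-action `F`, `ρ`-action `S` and distinguished elements `κb i = κ̄_i`. -/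
noncomputable def pr {M : Type} [AddCommGroup M] [Module K M]
    (F S : M →+ M) (κb : Fin d → M) (f : Fr K d) : M :=
  f.sum fun m x => x • F^[m.2.1] (S^[m.2.2] (κb m.1))

/-- The relation `p_i = ρ κ_i − Σ_j D_{ij} κ_j ∈ 𝓕`, where the entry `D_{ij} ∈ K⟨φ⟩`
is recorded as the finitely supported coefficient function of its powers of `φ`. -/
noncomputable def pelt (Dmat : Fin d → Fin d → (ℕ →₀ K)) (i : Fin d) : Fr K d :=
  Finsupp.single (i, 0, 1) (1 : K)
    - ∑ j : Fin d, (Dmat i j).sum fun k x => Finsupp.single (j, k, 0) x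

/-- `n_i = inf{n | ∃ (b,μ) ∈ J, lm(b) = φ^n κ_i} ∈ ℕ∪{∞}`. -/
noncomputable def nVal {N : Submodule K (Fr K d)} (J : JanetBasis γφ γρ d N)
    (i : Fin d) : ℕ∞ :=
  sInf {c : ℕ∞ | ∃ n : ℕ, c = n ∧ ∃ ix, J.lmb ix = (i, n, 0)}

/-- `m_i = inf{n | ∃ (b,μ) ∈ J, ∃ l ≥ 0, lm(b) = φ^n ρ^l κ_i} ∈ ℕ∪{∞}`. -/
noncomputable def mVal {N : Submodule K (Fr K d)} (J : JanetBasis γφ γρ d N)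
    (i : Fin d) : ℕ∞ :=
  sInf {c : ℕ∞ | ∃ n : ℕ, c = n ∧ ∃ ix l, J.lmb ix = (i, n, l)}

/-- `W_gen = {φ^j κ_i | 1 ≤ i ≤ d, 0 ≤ j < n_i} ⊆ 𝓕`. -/
def Wgen {N : Submodule K (Fr K d)} (J : JanetBasis γφ γρ d N) : Set (Fr K d) :=
  {w | ∃ (i : Fin d) (j : ℕ), (j : ℕ∞) < nVal γφ γρ J i ∧
      w = Finsupp.single (i, j, 0) (1 : K)}

/-- `W_ind = {φ^j κ_i | 1 ≤ i ≤ d, 0 ≤ j < m_i} ⊆ 𝓕`. -/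
def Wind {N : Submodule K (Fr K d)} (J : JanetBasis γφ γρ d N) : Set (Fr K d) :=
  {w | ∃ (i : Fin d) (j : ℕ), (j : ℕ∞) < mVal γφ γρ J i ∧
      w = Finsupp.single (i, j, 0) (1 : K)}

end JanetSetup

open JanetSetup


namespace JanetSetup

section Helpers

variable {K : Type} [Field K] {d : ℕ} (γφ γρ : K →+* K)

lemma phiMul_single (m : MonIx d) (x : K) :
    PhiMul γφ (Finsupp.single m x) = Finsupp.single (m.1, m.2.1 + 1, m.2.2) (γφ x) := by
  unfold PhiMul; rw [Finsupp.mapRange_single, Finsupp.mapDomain_single]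

lemma rhoMul_single (m : MonIx d) (x : K) :
    RhoMul γρ (Finsupp.single m x) = Finsupp.single (m.1, m.2.1, m.2.2 + 1) (γρ x) := by
  unfold RhoMul; rw [Finsupp.mapRange_single, Finsupp.mapDomain_single]

lemma phiMul_add (f g : Fr K d) :
    PhiMul γφ (f + g) = PhiMul γφ f + PhiMul γφ g := by
  unfold PhiMul
  rw [Finsupp.mapRange_add (map_add γφ), Finsupp.mapDomain_add]

lemma rhoMul_add (f g : Fr K d) :
    RhoMul γρ (f + g) = RhoMul γρ f + RhoMul γρ g := by
  unfold RhoMul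
  rw [Finsupp.mapRange_add (map_add γρ), Finsupp.mapDomain_add]

lemma phiIter_add (k : ℕ) (f g : Fr K d) :
    (PhiMul γφ)^[k] (f + g) = (PhiMul γφ)^[k] f + (PhiMul γφ)^[k] g := by
  induction k with
  | zero => rfl
  | succ k ih => simp only [Function.iterate_succ_apply', ih, phiMul_add]

lemma rhoIter_add (k : ℕ) (f g : Fr K d) :
    (RhoMul γρ)^[k] (f + g) = (RhoMul γρ)^[k] f + (RhoMul γρ)^[k] g := by
  induction k with
  | zero => rfl
  | succ k ih => simp only [Function.iterate_succ_apply', ih, rhoMul_add]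

lemma phiIter_single_one (k : ℕ) (m : MonIx d) :
    (PhiMul γφ)^[k] (Finsupp.single m 1) = Finsupp.single (m.1, m.2.1 + k, m.2.2) 1 := by
  induction k with
  | zero => simp
  | succ k ih =>
    rw [Function.iterate_succ_apply', ih, phiMul_single, map_one]
    norm_num [add_assoc]

lemma rhoIter_single_one (k : ℕ) (m : MonIx d) :
    (RhoMul γρ)^[k] (Finsupp.single m 1) = Finsupp.single (m.1, m.2.1, m.2.2 + k) 1 := by
  induction k with
  | zero => simp
  | succ k ih =>
    rw [Function.iterate_succ_apply', ih, rhoMul_single, map_one]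
    norm_num [add_assoc]

lemma support_phiMul (f : Fr K d) {m : MonIx d} (hm : m ∈ (PhiMul γφ f).support) :
    ∃ m' ∈ f.support, m = (m'.1, m'.2.1 + 1, m'.2.2) := by
  have h1 := Finsupp.mapDomain_support hm
  rcases Finset.mem_image.mp h1 with ⟨m', hm', rfl⟩
  exact ⟨m', Finsupp.support_mapRange hm', rfl⟩

lemma support_rhoMul (f : Fr K d) {m : MonIx d} (hm : m ∈ (RhoMul γρ f).support) :
    ∃ m' ∈ f.support, m = (m'.1, m'.2.1, m'.2.2 + 1) := by
  have h1 := Finsupp.mapDomain_support hm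
  rcases Finset.mem_image.mp h1 with ⟨m', hm', rfl⟩
  exact ⟨m', Finsupp.support_mapRange hm', rfl⟩

lemma support_phiIter_rdeg (k : ℕ) (f : Fr K d) {m : MonIx d}
    (hm : m ∈ ((PhiMul γφ)^[k] f).support) : ∃ m' ∈ f.support, m.2.2 = m'.2.2 := by
  induction k generalizing m with
  | zero => exact ⟨m, hm, rfl⟩
  | succ k ih =>
    rw [Function.iterate_succ_apply'] at hm
    rcases support_phiMul γφ _ hm with ⟨m', hm', rfl⟩
    rcases ih hm' with ⟨m'', h1, h2⟩
    exact ⟨m'', h1, h2⟩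

lemma support_rhoIter_rdeg (k : ℕ) (f : Fr K d) {m : MonIx d}
    (hm : m ∈ ((RhoMul γρ)^[k] f).support) : ∃ m' ∈ f.support, m.2.2 = m'.2.2 + k := by
  induction k generalizing m with
  | zero => exact ⟨m, hm, rfl⟩
  | succ k ih =>
    rw [Function.iterate_succ_apply'] at hm
    rcases support_rhoMul γρ _ hm with ⟨m', hm', rfl⟩
    rcases ih hm' with ⟨m'', h1, h2⟩
    exact ⟨m'', h1, by show m'.2.2 + 1 = m''.2.2 + (k+1); omega⟩


/-- the subtracted part of `pelt`. -/
noncomputable def Qelt (Dmat : Fin d → Fin d → (ℕ →₀ K)) (i : Fin d) : Fr K d :=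
  ∑ j : Fin d, (Dmat i j).sum fun k x => Finsupp.single (j, k, 0) x

lemma pelt_add_Qelt (Dmat : Fin d → Fin d → (ℕ →₀ K)) (i : Fin d) :
    pelt Dmat i + Qelt Dmat i = Finsupp.single (i, 0, 1) (1 : K) := by
  unfold pelt Qelt; abel

lemma Qelt_support (Dmat : Fin d → Fin d → (ℕ →₀ K)) (i : Fin d) :
    ∀ m ∈ (Qelt Dmat i).support, m.2.2 = 0 := by
  intro m hm
  rcases Finset.mem_biUnion.mp (Finsupp.support_finset_sum hm) with ⟨j, _, hj⟩
  rcases Finset.mem_biUnion.mp (Finsupp.support_sum hj) with ⟨k, _, hk⟩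
  have := Finsupp.support_single_subset hk
  simp only [Finset.mem_singleton] at this
  rw [this]

section Mmod

variable {M : Type} [AddCommGroup M] [Module K M] (F S : M →+ M) (κb : Fin d → M)

/-- the target vectors of `pr`. -/
noncomputable def vtgt (m : MonIx d) : M := F^[m.2.1] (S^[m.2.2] (κb m.1))

lemma pr_def (f : Fr K d) : pr F S κb f = f.sum fun m x => x • vtgt F S κb m := rfl

lemma pr_single (m : MonIx d) (x : K) :
    pr F S κb (Finsupp.single m x) = x • vtgt F S κb m :=
  Finsupp.sum_single_index (zero_smul K _)

lemma pr_zero : pr F S κb (0 : Fr K d) = 0 := Finsupp.sum_zero_index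

lemma pr_add (f g : Fr K d) : pr F S κb (f + g) = pr F S κb f + pr F S κb g :=
  Finsupp.sum_add_index' (fun _ => zero_smul K _) (fun _ b c => add_smul b c _)

/-- `pr` as an additive monoid hom. -/
noncomputable def prHom : Fr K d →+ M :=
  { toFun := pr F S κb, map_zero' := pr_zero F S κb, map_add' := pr_add F S κb }

lemma pr_smul (x : K) (f : Fr K d) : pr F S κb (x • f) = x • pr F S κb f := by
  rw [pr_def, pr_def, Finsupp.smul_sum]
  refine (Finsupp.sum_smul_index fun i => zero_smul K (vtgt F S κb i)).trans ?_
  exact Finsupp.sum_congr fun m _ => mul_smul x _ _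

lemma pr_sub (f g : Fr K d) : pr F S κb (f - g) = pr F S κb f - pr F S κb g :=
  map_sub (prHom F S κb) f g

variable (hF : ∀ (x : K) (m : M), F (x • m) = γφ x • F m)
variable (hS : ∀ (x : K) (m : M), S (x • m) = γρ x • S m)
variable (hFS : ∀ m : M, F (S m) = S (F m))

include hFS in
lemma FS_iter (k : ℕ) (w : M) : S (F^[k] w) = F^[k] (S w) := by
  induction k with
  | zero => rfl
  | succ k ih =>
    rw [Function.iterate_succ_apply', Function.iterate_succ_apply', ← hFS, ih]

include hF in
lemma pr_phiMul (f : Fr K d) : pr F S κb (PhiMul γφ f) = F (pr F S κb f) := by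
  rw [pr_def]
  unfold PhiMul
  rw [Finsupp.sum_mapDomain_index (fun b => zero_smul K (vtgt F S κb b))
      (fun b x y => add_smul x y (vtgt F S κb b)),
    Finsupp.sum_mapRange_index (fun a => zero_smul K (vtgt F S κb (a.1, a.2.1 + 1, a.2.2))),
    pr_def, map_finsuppSum]
  refine Finsupp.sum_congr fun m _ => ?_
  rw [hF]
  congr 1
  show vtgt F S κb (m.1, m.2.1 + 1, m.2.2) = F (vtgt F S κb m)
  unfold vtgt
  exact Function.iterate_succ_apply' F m.2.1 _

include hS hFS in
lemma pr_rhoMul (f : Fr K d) : pr F S κb (RhoMul γρ f) = S (pr F S κb f) := by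
  rw [pr_def]
  unfold RhoMul
  rw [Finsupp.sum_mapDomain_index (fun b => zero_smul K (vtgt F S κb b))
      (fun b x y => add_smul x y (vtgt F S κb b)),
    Finsupp.sum_mapRange_index (fun a => zero_smul K (vtgt F S κb (a.1, a.2.1, a.2.2 + 1))),
    pr_def, map_finsuppSum]
  refine Finsupp.sum_congr fun m _ => ?_
  rw [hS]
  congr 1
  show vtgt F S κb (m.1, m.2.1, m.2.2 + 1) = S (vtgt F S κb m)
  unfold vtgt
  rw [FS_iter F S hFS]
  congr 1
  exact Function.iterate_succ_apply' S m.2.2 _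

include hF in
lemma pr_phiIter (k : ℕ) (f : Fr K d) :
    pr F S κb ((PhiMul γφ)^[k] f) = F^[k] (pr F S κb f) := by
  induction k with
  | zero => rfl
  | succ k ih =>
    rw [Function.iterate_succ_apply', Function.iterate_succ_apply',
      pr_phiMul γφ F S κb hF, ih]

include hS hFS in
lemma pr_rhoIter (k : ℕ) (f : Fr K d) :
    pr F S κb ((RhoMul γρ)^[k] f) = S^[k] (pr F S κb f) := by
  induction k with
  | zero => rfl
  | succ k ih =>
    rw [Function.iterate_succ_apply', Function.iterate_succ_apply',
      pr_rhoMul γρ F S κb hS hFS, ih]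

lemma pr_pelt (Dmat : Fin d → Fin d → (ℕ →₀ K))
    (hact : ∀ i, S (κb i) = ∑ j : Fin d, (Dmat i j).sum fun k x => x • F^[k] (κb j))
    (i : Fin d) : pr F S κb (pelt Dmat i) = 0 := by
  have hQ : pr F S κb (Qelt Dmat i) = S (κb i) := by
    rw [hact i]
    unfold Qelt
    rw [show pr F S κb = ⇑(prHom F S κb) from rfl, map_sum]
    refine Finset.sum_congr rfl fun j _ => ?_
    rw [map_finsuppSum (prHom F S κb)]
    refine Finsupp.sum_congr fun k _ => ?_
    show pr F S κb (Finsupp.single (j, k, 0) _) = _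
    rw [pr_single]
    rfl
  have hsingle : pr F S κb (Finsupp.single ((i, 0, 1) : MonIx d) (1 : K)) = S (κb i) := by
    rw [pr_single, one_smul]
    rfl
  have : pelt Dmat i = Finsupp.single ((i, 0, 1) : MonIx d) (1 : K) - Qelt Dmat i := by
    rw [← pelt_add_Qelt Dmat i]; abel
  rw [this, pr_sub, hQ, hsingle, sub_self]

include hF hS hFS in
lemma pr_DSpan_zero (Dmat : Fin d → Fin d → (ℕ →₀ K))
    (hact : ∀ i, S (κb i) = ∑ j : Fin d, (Dmat i j).sum fun k x => x • F^[k] (κb j))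
    {f : Fr K d} (hf : f ∈ DSpan γφ γρ (Set.range (pelt Dmat))) :
    pr F S κb f = 0 := by
  induction hf using Submodule.span_induction with
  | mem x hx =>
    rcases hx with ⟨k, j, g, ⟨i, rfl⟩, rfl⟩
    rw [pr_phiIter γφ F S κb hF, pr_rhoIter γρ F S κb hS hFS,
      pr_pelt F S κb Dmat hact i]
    rw [Function.iterate_fixed (map_zero S) j, Function.iterate_fixed (map_zero F) k]
  | zero => exact pr_zero F S κb
  | add x y _ _ hx hy => rw [pr_add, hx, hy, add_zero]
  | smul a x _ hx => rw [pr_smul, hx, smul_zero]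

/-- injectivity of `pr` on ρ-degree-0 elements. -/
lemma pr_inj_rdeg0
    (hli : LinearIndependent K fun p : Fin d × ℕ => F^[p.2] (κb p.1))
    {f : Fr K d} (h0 : ∀ m ∈ f.support, m.2.2 = 0)
    (hpr : pr F S κb f = 0) : f = 0 := by
  classical
  set e : (Fin d × ℕ) ↪ MonIx d :=
    ⟨fun p => (p.1, p.2, 0), by intro p q h; simpa [Prod.ext_iff] using h⟩ with he
  have hsub : ↑f.support ⊆ Set.range ⇑e := by
    intro m hm
    refine ⟨(m.1, m.2.1), ?_⟩
    have := h0 m hm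
    simp only [he]
    exact Prod.ext rfl (Prod.ext rfl this.symm)
  set g := Finsupp.comapDomain (⇑e) f (e.injective.injOn.mono (Set.subset_univ _)) with hg
  have hfg : Finsupp.embDomain e g = f := Finsupp.embDomain_comapDomain hsub
  have hlc : Finsupp.linearCombination K (fun p : Fin d × ℕ => F^[p.2] (κb p.1)) g = 0 := by
    rw [Finsupp.linearCombination_apply, ← hpr, ← hfg, pr_def, Finsupp.sum_embDomain]
    rfl
  have : g = 0 := linearIndependent_iff.mp hli g hlc
  rw [← hfg, this, Finsupp.embDomain_zero]

end Mmod

/-- every element of `𝓕` reduces modulo `⟨p_1,…,p_d⟩` to a ρ-degree-0 element. -/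
lemma reduce (Dmat : Fin d → Fin d → (ℕ →₀ K)) :
    ∀ (l : ℕ) (f : Fr K d), (∀ m ∈ f.support, m.2.2 ≤ l) →
      ∃ h : Fr K d, (∀ m ∈ h.support, m.2.2 = 0) ∧
        f - h ∈ DSpan γφ γρ (Set.range (pelt Dmat)) := by
  classical
  intro l
  induction l with
  | zero =>
    intro f hf
    exact ⟨f, fun m hm => Nat.le_zero.mp (hf m hm), by rw [sub_self]; exact zero_mem _⟩
  | succ l IH =>
    have hsingle : ∀ (a : MonIx d) (b : K), a.2.2 ≤ l + 1 →
        ∃ h1 : Fr K d, (∀ m ∈ h1.support, m.2.2 = 0) ∧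
          Finsupp.single a b - h1 ∈ DSpan γφ γρ (Set.range (pelt Dmat)) := by
      rintro ⟨j, k, l'⟩ b hle
      match l', hle with
      | 0, _ =>
        refine ⟨Finsupp.single ((j, k, 0) : MonIx d) b, ?_, by rw [sub_self]; exact zero_mem _⟩
        intro m hm
        have := Finsupp.support_single_subset hm
        simp only [Finset.mem_singleton] at this
        rw [this]
      | (l'' + 1), hle =>
        have hle' : l'' + 1 ≤ l + 1 := hle
        have hl'' : l'' ≤ l := by omega
        have key : (Finsupp.single ((j, k, l'' + 1) : MonIx d) b : Fr K d)
            = b • (PhiMul γφ)^[k] ((RhoMul γρ)^[l''] (pelt Dmat j))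
              + b • (PhiMul γφ)^[k] ((RhoMul γρ)^[l''] (Qelt Dmat j)) := by
          rw [← smul_add, ← phiIter_add, ← rhoIter_add, pelt_add_Qelt,
            rhoIter_single_one, phiIter_single_one]
          rw [Finsupp.smul_single, smul_eq_mul, mul_one]
          norm_num [add_comm]
        set g : Fr K d := b • (PhiMul γφ)^[k] ((RhoMul γρ)^[l''] (Qelt Dmat j)) with hgdef
        have hgsupp : ∀ m ∈ g.support, m.2.2 ≤ l := by
          intro m hm
          have hm2 := Finsupp.support_smul hm
          rcases support_phiIter_rdeg γφ k _ hm2 with ⟨m', hm', heq⟩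
          rcases support_rhoIter_rdeg γρ l'' _ hm' with ⟨m'', hm'', heq2⟩
          have h0 := Qelt_support Dmat j m'' hm''
          omega
        obtain ⟨h1, hs1, hmem1⟩ := IH g hgsupp
        refine ⟨h1, hs1, ?_⟩
        have hrw : (Finsupp.single ((j, k, l'' + 1) : MonIx d) b : Fr K d) - h1
            = b • (PhiMul γφ)^[k] ((RhoMul γρ)^[l''] (pelt Dmat j)) + (g - h1) := by
          rw [key]; abel
        rw [hrw]
        refine add_mem (Submodule.smul_mem _ b ?_) hmem1
        exact Submodule.subset_span ⟨k, l'', pelt Dmat j, ⟨j, rfl⟩, rfl⟩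
    intro f
    induction f using Finsupp.induction with
    | zero => exact fun _ => ⟨0, by simp, by rw [sub_self]; exact zero_mem _⟩
    | single_add a b f ha hb ihf =>
      intro hsupp
      have hsame : (Finsupp.single a b + f).support = insert a f.support := by
        rw [Finsupp.support_add_eq, Finsupp.support_single_ne_zero a hb]
        · exact rfl
        · rw [Finsupp.support_single_ne_zero a hb]
          simpa using ha
      rw [hsame] at hsupp
      obtain ⟨h2, hs2, hm2⟩ := ihf fun m hm => hsupp m (Finset.mem_insert_of_mem hm)
      obtain ⟨h1, hs1, hm1⟩ := hsingle a b (hsupp a (Finset.mem_insert_self a _))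
      refine ⟨h1 + h2, ?_, ?_⟩
      · intro m hm
        rcases Finset.mem_union.mp (Finsupp.support_add hm) with h | h
        · exact hs1 m h
        · exact hs2 m h
      · have : Finsupp.single a b + f - (h1 + h2)
            = (Finsupp.single a b - h1) + (f - h2) := by abel
        rw [this]
        exact add_mem hm1 hm2

lemma mlt_iff (a b : MonIx d) : MLt a b ↔
    ((b.1 : ℕ) < (a.1 : ℕ) ∨ ((a.1 : ℕ) = (b.1 : ℕ) ∧
      (a.2.1 < b.2.1 ∨ (a.2.1 = b.2.1 ∧ a.2.2 < b.2.2)))) := by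
  unfold MLt
  rw [Fin.lt_def, Fin.ext_iff]

lemma mlt_trichotomy (a b : MonIx d) : a = b ∨ MLt a b ∨ MLt b a := by
  rw [mlt_iff, mlt_iff]
  have : a = b ↔ ((a.1 : ℕ) = (b.1 : ℕ) ∧ a.2.1 = b.2.1 ∧ a.2.2 = b.2.2) := by
    rcases a with ⟨a1, a2, a3⟩; rcases b with ⟨b1, b2, b3⟩
    simp [Prod.ext_iff, Fin.ext_iff]
  rw [this]
  omega

lemma mlt_trans {a b c : MonIx d} (h1 : MLt a b) (h2 : MLt b c) : MLt a c := by
  rw [mlt_iff] at *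
  omega

lemma exists_mlt_max (s : Finset (MonIx d)) (hs : s.Nonempty) :
    ∃ m ∈ s, ∀ m' ∈ s, m' ≠ m → MLt m' m := by
  classical
  induction s using Finset.induction_on with
  | empty => exact absurd hs (by simp)
  | @insert a t hat ih =>
    rcases Finset.eq_empty_or_nonempty t with rfl | ht
    · refine ⟨a, Finset.mem_insert_self a _, ?_⟩
      intro m' hm' hne
      rcases Finset.mem_insert.mp hm' with rfl | h
      · exact absurd rfl hne
      · exact absurd h (Finset.notMem_empty m')
    · obtain ⟨m, hm, hmax⟩ := ih ht
      rcases mlt_trichotomy a m with heq | h | h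
      · refine ⟨a, Finset.mem_insert_self a _, ?_⟩
        intro m' hm' hne
        rcases Finset.mem_insert.mp hm' with rfl | h'
        · exact absurd rfl hne
        · exact heq ▸ hmax m' h' (heq ▸ hne)
      · refine ⟨m, Finset.mem_insert_of_mem hm, ?_⟩
        intro m' hm' hne
        rcases Finset.mem_insert.mp hm' with rfl | h'
        · exact h
        · exact hmax m' h' hne
      · refine ⟨a, Finset.mem_insert_self a _, ?_⟩
        intro m' hm' hne
        rcases Finset.mem_insert.mp hm' with rfl | h'
        · exact absurd rfl hne
        · by_cases hem : m' = m
          · subst hem; exact h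
          · exact mlt_trans (hmax m' h' hem) h

section Count

variable {M : Type} [AddCommGroup M] [Module K M] (F S : M →+ M) (κb : Fin d → M)

/-- span of `F^[a] κ̄_c`, `a ≤ A`. -/
noncomputable def Vspan (A : ℕ) : Submodule K M :=
  Submodule.span K {w | ∃ (c : Fin d) (a : ℕ), a ≤ A ∧ w = F^[a] (κb c)}

lemma Vspan_mono {A A' : ℕ} (h : A ≤ A') : Vspan (K := K) F κb A ≤ Vspan (K := K) F κb A' :=
  Submodule.span_mono fun w ⟨c, a, ha, hw⟩ => ⟨c, a, le_trans ha h, hw⟩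

variable (hF : ∀ (x : K) (m : M), F (x • m) = γφ x • F m)
variable (hS : ∀ (x : K) (m : M), S (x • m) = γρ x • S m)
variable (hFS : ∀ m : M, F (S m) = S (F m))

include hF in
lemma F_maps_Vspan {A : ℕ} {w : M} (hw : w ∈ Vspan (K := K) F κb A) :
    F w ∈ Vspan (K := K) F κb (A + 1) := by
  induction hw using Submodule.span_induction with
  | mem x hx =>
    rcases hx with ⟨c, a, ha, rfl⟩
    exact Submodule.subset_span ⟨c, a + 1, by omega,
      (Function.iterate_succ_apply' F a _).symm⟩
  | zero => rw [map_zero]; exact zero_mem _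
  | add x y _ _ hx hy => rw [map_add]; exact add_mem hx hy
  | smul t x _ hx => rw [hF]; exact Submodule.smul_mem _ _ hx

include hF in
lemma Fk_maps_Vspan {A : ℕ} (k : ℕ) {w : M} (hw : w ∈ Vspan (K := K) F κb A) :
    F^[k] w ∈ Vspan (K := K) F κb (A + k) := by
  induction k with
  | zero => exact hw
  | succ k ih =>
    rw [Function.iterate_succ_apply', ← Nat.add_assoc]
    exact F_maps_Vspan γφ F κb hF ih

variable (Dmat : Fin d → Fin d → (ℕ →₀ K)) (B : ℕ)
variable (hact : ∀ i, S (κb i) = ∑ j : Fin d, (Dmat i j).sum fun k x => x • F^[k] (κb j))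
variable (hB : ∀ (i j : Fin d), ∀ k ∈ (Dmat i j).support, k ≤ B)

include hact hB in
lemma Sκ_mem_Vspan (c : Fin d) : S (κb c) ∈ Vspan (K := K) F κb B := by
  rw [hact c]
  refine Submodule.sum_mem _ fun j _ => ?_
  rw [Finsupp.sum]
  refine Submodule.sum_mem _ fun k hk => ?_
  exact Submodule.smul_mem _ _ (Submodule.subset_span ⟨j, k, hB c j k hk, rfl⟩)

include hF hS hFS hact hB in
lemma S_maps_Vspan {A : ℕ} {w : M} (hw : w ∈ Vspan (K := K) F κb A) :
    S w ∈ Vspan (K := K) F κb (A + B) := by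
  induction hw using Submodule.span_induction with
  | mem x hx =>
    rcases hx with ⟨c, a, ha, rfl⟩
    rw [FS_iter F S hFS]
    have h1 : S (κb c) ∈ Vspan (K := K) F κb B := Sκ_mem_Vspan F S κb Dmat B hact hB c
    have h2 := Fk_maps_Vspan γφ F κb hF a h1
    exact Vspan_mono F κb (by omega) h2
  | zero => rw [map_zero]; exact zero_mem _
  | add x y _ _ hx hy => rw [map_add]; exact add_mem hx hy
  | smul t x _ hx => rw [hS]; exact Submodule.smul_mem _ _ hx

include hF hS hFS hact hB in
lemma Sl_mem_Vspan (i : Fin d) (l : ℕ) : S^[l] (κb i) ∈ Vspan (K := K) F κb (l * B) := by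
  induction l with
  | zero => exact Submodule.subset_span ⟨i, 0, Nat.zero_le _, rfl⟩
  | succ l ih =>
    rw [Function.iterate_succ_apply']
    have := S_maps_Vspan γφ γρ F S κb hF hS hFS Dmat B hact hB ih
    exact Vspan_mono F κb (by ring_nf; omega) this

include hF hS hFS hact hB in
lemma exists_dependence (i : Fin d) :
    ∃ g : Fin (d * d * B + 1) × Fin (d + 1) → K,
      (∑ p : Fin (d * d * B + 1) × Fin (d + 1),
        g p • F^[(p.1 : ℕ)] (S^[(p.2 : ℕ)] (κb i)) = 0)
      ∧ ∃ p, g p ≠ 0 := by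
  classical
  set T := d * d * B with hT
  set A := T + d * B with hA
  set u : Fin (T + 1) × Fin (d + 1) → M :=
    fun p => F^[(p.1 : ℕ)] (S^[(p.2 : ℕ)] (κb i)) with hu
  have hmem : ∀ p, u p ∈ Vspan (K := K) F κb A := by
    intro p
    have h1 := Sl_mem_Vspan γφ γρ F S κb hF hS hFS Dmat B hact hB i (p.2 : ℕ)
    have h2 := Fk_maps_Vspan γφ F κb hF (p.1 : ℕ) h1
    refine Vspan_mono F κb ?_ h2
    have e1 : (p.1 : ℕ) ≤ T := Fin.is_le p.1
    have e2 : (p.2 : ℕ) ≤ d := Fin.is_le p.2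
    have e3 : (p.2 : ℕ) * B ≤ d * B := Nat.mul_le_mul_right B e2
    omega
  have hnli : ¬ LinearIndependent K u := by
    intro hli2
    set s : Finset M := (Finset.univ : Finset (Fin d × Fin (A + 1))).image
      (fun q => F^[(q.2 : ℕ)] (κb q.1)) with hs
    have hVs : Vspan (K := K) F κb A = Submodule.span K (↑s : Set M) := by
      unfold Vspan
      congr 1
      ext w
      simp only [hs, Finset.coe_image, Finset.coe_univ, Set.image_univ, Set.mem_range,
        Set.mem_setOf_eq]
      constructor
      · rintro ⟨c, a, ha, rfl⟩
        exact ⟨(c, ⟨a, by omega⟩), rfl⟩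
      · rintro ⟨q, rfl⟩
        exact ⟨q.1, q.2, Fin.is_le q.2, rfl⟩
    have hfd : FiniteDimensional K (Submodule.span K (↑s : Set M)) :=
      FiniteDimensional.span_of_finite K s.finite_toSet
    have hcomp : ∀ p, u p ∈ Submodule.span K (↑s : Set M) := fun p => hVs ▸ hmem p
    set u' : Fin (T + 1) × Fin (d + 1) → Submodule.span K (↑s : Set M) :=
      fun p => ⟨u p, hcomp p⟩ with hu'
    have hli3 : LinearIndependent K u' := by
      refine LinearIndependent.of_comp (Submodule.span K (↑s : Set M)).subtype ?_
      have : (Submodule.span K (↑s : Set M)).subtype ∘ u' = u := funext fun p => rfl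
      rw [this]
      exact hli2
    have hcard := hli3.fintype_card_le_finrank
    rw [Fintype.card_prod, Fintype.card_fin, Fintype.card_fin] at hcard
    have hrank : Module.finrank K (Submodule.span K (↑s : Set M)) ≤ s.card :=
      finrank_span_finset_le_card s
    have hcard2 : s.card ≤ d * (A + 1) := by
      refine le_trans Finset.card_image_le ?_
      simp [Finset.card_univ]
    have hkey : d * (A + 1) + 1 = (T + 1) * (d + 1) := by
      rw [hA, hT]; ring
    omega
  obtain ⟨g, hsum, p, hp⟩ := Fintype.not_linearIndependent_iff.mp hnli
  exact ⟨g, hsum, p, hp⟩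

end Count


end Helpers

end JanetSetup

/-!
STATEMENT 7: In the situation below, `m_i < ∞` for all `i = 1, …, d`.
-/
theorem mVal_lt_top
    {K : Type} [Field K] {d : ℕ} (γφ γρ : K →+* K)
    (hcomm : ∀ x : K, γφ (γρ x) = γρ (γφ x))
    {M : Type} [AddCommGroup M] [Module K M]
    -- `M` is a left `D`-module: `F` and `S` are the commuting semilinear actions
    -- of `φ` and `ρ` on `M`
    (F S : M →+ M)
    (hF : ∀ (x : K) (m : M), F (x • m) = γφ x • F m)
    (hS : ∀ (x : K) (m : M), S (x • m) = γρ x • S m)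
    (hFS : ∀ m : M, F (S m) = S (F m))
    -- `M` is free of rank `d` as `K⟨φ⟩`-module with basis `κ̄_1, …, κ̄_d`
    (κb : Fin d → M)
    (hli : LinearIndependent K fun p : Fin d × ℕ => F^[p.2] (κb p.1))
    (hsp : Submodule.span K (Set.range fun p : Fin d × ℕ => F^[p.2] (κb p.1)) = ⊤)
    -- the `ρ`-action on the basis is given by the matrix `D ∈ Mat_{d×d}(K⟨φ⟩)`
    (Dmat : Fin d → Fin d → (ℕ →₀ K))
    (hact : ∀ i, S (κb i) = ∑ j : Fin d, (Dmat i j).sum fun k x => x • F^[k] (κb j))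
    -- `J` is a Janet basis of `⟨p_1, …, p_d⟩`
    (J : JanetBasis γφ γρ d (DSpan γφ γρ (Set.range (pelt Dmat))))
    :
    ∀ i : Fin d, mVal γφ γρ J i < ⊤ := by
  classical
  intro i
  set B := (Finset.univ : Finset (Fin d × Fin d)).sup
    (fun jc => (Dmat jc.1 jc.2).support.sup id) with hB0
  have hB : ∀ (a b : Fin d), ∀ k ∈ (Dmat a b).support, k ≤ B := by
    intro a b k hk
    rw [hB0]
    exact le_trans (Finset.le_sup (f := id) hk)
      (Finset.le_sup (f := fun jc : Fin d × Fin d => (Dmat jc.1 jc.2).support.sup id)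
        (Finset.mem_univ (a, b)))
  obtain ⟨g, hsum, p₀, hp₀⟩ :=
    exists_dependence γφ γρ F S κb hF hS hFS Dmat B hact hB i
  set f : Fr K d := ∑ p : Fin (d * d * B + 1) × Fin (d + 1),
    Finsupp.single ((i, (p.1 : ℕ), (p.2 : ℕ)) : MonIx d) (g p) with hfdef
  have hfapply : ∀ q : Fin (d * d * B + 1) × Fin (d + 1),
      f (i, (q.1 : ℕ), (q.2 : ℕ)) = g q := by
    intro q
    rw [hfdef, Finsupp.finset_sum_apply]
    rw [Finset.sum_eq_single q]
    · simp
    · intro p _ hpq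
      rw [Finsupp.single_apply, if_neg]
      intro hEq
      apply hpq
      have h1 : (p.1 : ℕ) = (q.1 : ℕ) ∧ (p.2 : ℕ) = (q.2 : ℕ) := by
        simpa [Prod.ext_iff] using hEq
      exact Prod.ext (Fin.ext h1.1) (Fin.ext h1.2)
    · intro h
      exact absurd (Finset.mem_univ q) h
  have hf0 : f ≠ 0 := by
    intro h
    apply hp₀
    rw [← hfapply p₀, h]
    rfl
  have hfsupp : ∀ m ∈ f.support, m.1 = i ∧ m.2.2 ≤ d := by
    intro m hm
    rcases Finset.mem_biUnion.mp (Finsupp.support_finset_sum hm) with ⟨p, _, hp⟩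
    have hmp := Finsupp.support_single_subset hp
    simp only [Finset.mem_singleton] at hmp
    subst hmp
    exact ⟨rfl, Fin.is_le p.2⟩
  have hprf : pr F S κb f = 0 := by
    rw [hfdef, show pr F S κb = ⇑(prHom F S κb) from rfl, map_sum, ← hsum]
    refine Finset.sum_congr rfl fun p _ => ?_
    show pr F S κb (Finsupp.single ((i, (p.1 : ℕ), (p.2 : ℕ)) : MonIx d) (g p)) = _
    rw [pr_single]
    rfl
  have hfN : f ∈ DSpan γφ γρ (Set.range (pelt Dmat)) := by
    obtain ⟨h, hh0, hhmem⟩ := reduce γφ γρ Dmat d f (fun m hm => (hfsupp m hm).2)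
    have hprh : pr F S κb h = 0 := by
      have h1 : pr F S κb (f - h) = 0 :=
        pr_DSpan_zero γφ γρ F S κb hF hS hFS Dmat hact hhmem
      rw [pr_sub, hprf, zero_sub, neg_eq_zero] at h1
      exact h1
    have hz : h = 0 := pr_inj_rdeg0 F S κb hli hh0 hprh
    rw [hz, sub_zero] at hhmem
    exact hhmem
  obtain ⟨mstar, hmem, hmax⟩ :=
    exists_mlt_max f.support (Finsupp.support_nonempty_iff.mpr hf0)
  obtain ⟨ix, hc⟩ := J.lm_cover f hfN hf0 mstar ⟨hmem, hmax⟩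
  rcases hc with ⟨a, b, _, _, hmeq⟩
  have hix1 : (J.lmb ix).1 = i := by
    have h1 := (hfsupp mstar hmem).1
    rw [hmeq] at h1
    exact h1
  have hmemS : (((J.lmb ix).2.1 : ℕ) : ℕ∞) ∈
      {c : ℕ∞ | ∃ n : ℕ, c = n ∧ ∃ ix' l, J.lmb ix' = (i, n, l)} :=
    ⟨(J.lmb ix).2.1, rfl, ix, (J.lmb ix).2.2, by rw [← hix1]⟩
  exact lt_of_le_of_lt (sInf_le hmemS) (WithTop.coe_lt_top _)
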